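/- For the Euclidean minisum objective, the full inverse constraint 'x̄ minimizes x ↦ Σᵢ ŵᵢ‖x − Aᵢ‖₂' is equivalent to the single finite condition ‖Σ_{i : Aᵢ ≠ x̄} ŵᵢ (Aᵢ − x̄)/‖Aᵢ − x̄‖₂ ‖₂ ≤ Σ_{i : Aᵢ = x̄} ŵᵢ, for nonnegative weights ŵ. -/

import Mathlib

open scoped Classical

open scoped RealInnerProductSpace in
private lemma FW_norm_lower {E : Type*} [NormedAddCommGroup E] [InnerProductSpace ℝ E]
    (v d : E) (hv : v ≠ 0) : ‖v‖ + ⟪v, d⟫ / ‖v‖ ≤ ‖v + d‖ := by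
  have hn : (0:ℝ) < ‖v‖ := norm_pos_iff.mpr hv
  have h1 : ⟪v, v + d⟫ ≤ ‖v‖ * ‖v + d‖ := real_inner_le_norm v (v + d)
  have h2 : ⟪v, v + d⟫ = ‖v‖ ^ 2 + ⟪v, d⟫ := by
    rw [inner_add_right, real_inner_self_eq_norm_sq]
  rw [← sub_nonneg]
  have : ‖v + d‖ - (‖v‖ + ⟪v, d⟫ / ‖v‖) = (‖v‖ * ‖v + d‖ - ⟪v, v + d⟫) / ‖v‖ := by
    field_simp [h2]; rw [h2]
  rw [this]
  exact div_nonneg (by linarith) hn.le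

open scoped RealInnerProductSpace in
private lemma FW_norm_upper {E : Type*} [NormedAddCommGroup E] [InnerProductSpace ℝ E]
    (v d : E) (hv : v ≠ 0) :
    ‖v + d‖ ≤ ‖v‖ + ⟪v, d⟫ / ‖v‖ + ‖d‖ ^ 2 / (2 * ‖v‖) := by
  have hn : (0:ℝ) < ‖v‖ := norm_pos_iff.mpr hv
  have hsq : ‖v + d‖ ^ 2 = ‖v‖ ^ 2 + 2 * ⟪v, d⟫ + ‖d‖ ^ 2 := norm_add_sq_real v d
  have habs : -(‖v‖ * ‖d‖) ≤ ⟪v, d⟫ := neg_le_of_abs_le (abs_real_inner_le_norm v d)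
  have hR : (0:ℝ) ≤ ‖v‖ + ⟪v, d⟫ / ‖v‖ + ‖d‖ ^ 2 / (2 * ‖v‖) := by
    rw [← sub_nonneg]
    have : ‖v‖ + ⟪v, d⟫ / ‖v‖ + ‖d‖ ^ 2 / (2 * ‖v‖) - 0
        = (2 * ‖v‖ ^ 2 + 2 * ⟪v, d⟫ + ‖d‖ ^ 2) / (2 * ‖v‖) := by field_simp; ring
    rw [this]
    apply div_nonneg _ (by positivity)
    nlinarith [sq_nonneg (‖v‖ - ‖d‖)]
  have hsq2 : ‖v + d‖ ^ 2 ≤ (‖v‖ + ⟪v, d⟫ / ‖v‖ + ‖d‖ ^ 2 / (2 * ‖v‖)) ^ 2 := by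
    have key : (‖v‖ + ⟪v, d⟫ / ‖v‖ + ‖d‖ ^ 2 / (2 * ‖v‖)) ^ 2
        = (‖v‖ ^ 2 + 2 * ⟪v, d⟫ + ‖d‖ ^ 2)
          + (2 * ⟪v, d⟫ + ‖d‖ ^ 2) ^ 2 / (4 * ‖v‖ ^ 2) := by
      field_simp; ring
    have h := div_nonneg (sq_nonneg (2 * ⟪v, d⟫ + ‖d‖ ^ 2))
      (by positivity : (0:ℝ) ≤ 4 * ‖v‖ ^ 2)
    rw [hsq, key]; linarith
  calc ‖v + d‖ = Real.sqrt (‖v + d‖ ^ 2) := (Real.sqrt_sq (norm_nonneg _)).symm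
    _ ≤ Real.sqrt ((‖v‖ + ⟪v, d⟫ / ‖v‖ + ‖d‖ ^ 2 / (2 * ‖v‖)) ^ 2) := Real.sqrt_le_sqrt hsq2
    _ = _ := Real.sqrt_sq hR

open scoped RealInnerProductSpace in
set_option maxHeartbeats 1000000 in
/-- Classical optimality condition for the Euclidean Fermat–Weber
problem: `x̄` minimizes the weighted sum of Euclidean distances iff the norm of the sum
of weighted unit vectors towards the clients distinct from `x̄` is at most the total
weight of clients located at `x̄`. -/
theorem euclidean_minisum_optimality_condition {n : ℕ}
    (A : Fin n → EuclideanSpace ℝ (Fin 2)) (xbar : EuclideanSpace ℝ (Fin 2))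
    (what : Fin n → ℝ) (hw : ∀ i, 0 ≤ what i) :
    (∀ x : EuclideanSpace ℝ (Fin 2),
        (∑ i, what i * ‖xbar - A i‖) ≤ ∑ i, what i * ‖x - A i‖) ↔
      ‖∑ i ∈ Finset.univ.filter (fun i => A i ≠ xbar),
          (what i / ‖A i - xbar‖) • (A i - xbar)‖ ≤
        ∑ i ∈ Finset.univ.filter (fun i => A i = xbar), what i := by
  set s : Finset (Fin n) := Finset.univ.filter (fun i => A i ≠ xbar) with hs
  set t : Finset (Fin n) := Finset.univ.filter (fun i => A i = xbar) with ht
  set S : EuclideanSpace ℝ (Fin 2) :=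
    ∑ i ∈ s, (what i / ‖A i - xbar‖) • (A i - xbar) with hS
  set W : ℝ := ∑ i ∈ t, what i with hW
  have hmem_s : ∀ i ∈ s, A i ≠ xbar := fun i hi => (Finset.mem_filter.mp hi).2
  have hmem_t : ∀ i ∈ t, A i = xbar := fun i hi => (Finset.mem_filter.mp hi).2
  have hsplit : ∀ g : Fin n → ℝ, ∑ i, g i = ∑ i ∈ s, g i + ∑ i ∈ t, g i := by
    intro g
    rw [← Finset.sum_filter_add_sum_filter_not Finset.univ (fun i => A i = xbar) g, add_comm]
  have hW0 : 0 ≤ W := Finset.sum_nonneg fun i _ => hw i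
  constructor
  · -- optimality ⇒ condition
    intro hmin
    by_cases hS0 : S = 0
    · rw [hS0, norm_zero]; exact hW0
    have hSpos : (0:ℝ) < ‖S‖ := norm_pos_iff.mpr hS0
    set C : ℝ := ∑ i ∈ s, what i / (2 * ‖A i - xbar‖) with hC
    have hC0 : 0 ≤ C := Finset.sum_nonneg fun i hi =>
      div_nonneg (hw i) (by positivity)
    apply le_of_forall_pos_le_add
    intro ε hε
    set δ : ℝ := ε / (C + 1) with hδ
    have hδpos : 0 < δ := div_pos hε (by linarith)
    set d : EuclideanSpace ℝ (Fin 2) := (δ / ‖S‖) • S with hd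
    have hnd : ‖d‖ = δ := by
      rw [hd, norm_smul, Real.norm_eq_abs, abs_of_pos (div_pos hδpos hSpos)]
      field_simp
    have hSd : ⟪S, d⟫ = δ * ‖S‖ := by
      rw [hd, real_inner_smul_right, real_inner_self_eq_norm_sq]
      field_simp
    set x : EuclideanSpace ℝ (Fin 2) := xbar + d with hx
    have hkey : ∀ i ∈ s, what i * ‖x - A i‖ ≤
        what i * ‖xbar - A i‖ - ⟪(what i / ‖A i - xbar‖) • (A i - xbar), d⟫
          + what i / (2 * ‖A i - xbar‖) * δ ^ 2 := by
      intro i hi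
      have hvne : xbar - A i ≠ 0 := sub_ne_zero.mpr (Ne.symm (hmem_s i hi))
      have hnpos : (0:ℝ) < ‖A i - xbar‖ := norm_pos_iff.mpr (sub_ne_zero.mpr (hmem_s i hi))
      have hup := FW_norm_upper (xbar - A i) d hvne
      have hxe : xbar - A i + d = x - A i := by rw [hx]; abel
      rw [hxe, hnd] at hup
      have hnorm : ‖xbar - A i‖ = ‖A i - xbar‖ := norm_sub_rev _ _
      have hinner : ⟪xbar - A i, d⟫ = -⟪A i - xbar, d⟫ := by
        rw [← inner_neg_left]; congr 1; abel
      have hip : ⟪(what i / ‖A i - xbar‖) • (A i - xbar), d⟫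
          = (what i / ‖A i - xbar‖) * ⟪A i - xbar, d⟫ := real_inner_smul_left _ _ _
      rw [hnorm, hinner] at hup
      have hmul := mul_le_mul_of_nonneg_left hup (hw i)
      rw [hip]
      have e1 : what i * (‖A i - xbar‖ + -⟪A i - xbar, d⟫ / ‖A i - xbar‖
            + δ ^ 2 / (2 * ‖A i - xbar‖))
          = what i * ‖A i - xbar‖ - what i / ‖A i - xbar‖ * ⟪A i - xbar, d⟫
            + what i / (2 * ‖A i - xbar‖) * δ ^ 2 := by
        field_simp; ring
      rw [e1] at hmul
      rw [hnorm]
      linarith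
    have hsum_s := Finset.sum_le_sum hkey
    have ht2 : ∑ i ∈ t, what i * ‖x - A i‖ = W * δ := by
      rw [hW, Finset.sum_mul]
      refine Finset.sum_congr rfl fun i hi => ?_
      rw [hmem_t i hi]
      have : x - xbar = d := by rw [hx]; abel
      rw [this, hnd]
    have ht1 : ∑ i ∈ t, what i * ‖xbar - A i‖ = 0 := by
      refine Finset.sum_eq_zero fun i hi => ?_
      rw [hmem_t i hi, sub_self, norm_zero, mul_zero]
    have hinnerS : ∑ i ∈ s, ⟪(what i / ‖A i - xbar‖) • (A i - xbar), d⟫ = ⟪S, d⟫ := by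
      rw [hS, sum_inner]
    have hexp : ∑ i ∈ s, (what i * ‖xbar - A i‖
          - ⟪(what i / ‖A i - xbar‖) • (A i - xbar), d⟫
          + what i / (2 * ‖A i - xbar‖) * δ ^ 2)
        = ∑ i ∈ s, what i * ‖xbar - A i‖ - ⟪S, d⟫ + C * δ ^ 2 := by
      rw [Finset.sum_add_distrib, Finset.sum_sub_distrib, hinnerS, hC, Finset.sum_mul]
    rw [hexp] at hsum_s
    have hmx := hmin x
    rw [hsplit (fun i => what i * ‖xbar - A i‖), hsplit (fun i => what i * ‖x - A i‖),
      ht1, ht2] at hmx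
    have hfin : δ * ‖S‖ ≤ C * δ ^ 2 + W * δ := by
      rw [← hSd]; linarith
    have hdiv : ‖S‖ ≤ C * δ + W := by
      have h2 : δ * ‖S‖ ≤ δ * (C * δ + W) := by nlinarith [hfin]
      exact le_of_mul_le_mul_left h2 hδpos
    have hCδ : C * δ ≤ ε := by
      have h1 : δ * (C + 1) = ε := by rw [hδ]; field_simp
      nlinarith [hδpos.le, hC0]
    linarith
  · -- condition ⇒ optimality
    intro hcond x
    set d : EuclideanSpace ℝ (Fin 2) := x - xbar with hd
    have hkey : ∀ i ∈ s, what i * ‖xbar - A i‖ ≤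
        what i * ‖x - A i‖ + ⟪(what i / ‖A i - xbar‖) • (A i - xbar), d⟫ := by
      intro i hi
      have hvne : xbar - A i ≠ 0 := sub_ne_zero.mpr (Ne.symm (hmem_s i hi))
      have hnpos : (0:ℝ) < ‖A i - xbar‖ := norm_pos_iff.mpr (sub_ne_zero.mpr (hmem_s i hi))
      have hlow := FW_norm_lower (xbar - A i) d hvne
      have hxe : xbar - A i + d = x - A i := by rw [hd]; abel
      rw [hxe] at hlow
      have hnorm : ‖xbar - A i‖ = ‖A i - xbar‖ := norm_sub_rev _ _
      have hinner : ⟪xbar - A i, d⟫ = -⟪A i - xbar, d⟫ := by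
        rw [← inner_neg_left]; congr 1; abel
      have hip : ⟪(what i / ‖A i - xbar‖) • (A i - xbar), d⟫
          = (what i / ‖A i - xbar‖) * ⟪A i - xbar, d⟫ := real_inner_smul_left _ _ _
      rw [hnorm, hinner] at hlow
      have hmul := mul_le_mul_of_nonneg_left hlow (hw i)
      rw [hip, hnorm]
      have e1 : what i * (‖A i - xbar‖ + -⟪A i - xbar, d⟫ / ‖A i - xbar‖)
          = what i * ‖A i - xbar‖ - what i / ‖A i - xbar‖ * ⟪A i - xbar, d⟫ := by
        field_simp; ring
      rw [e1] at hmul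
      linarith
    have hsum_s := Finset.sum_le_sum hkey
    have hinnerS : ∑ i ∈ s, ⟪(what i / ‖A i - xbar‖) • (A i - xbar), d⟫ = ⟪S, d⟫ := by
      rw [hS, sum_inner]
    have hexp : ∑ i ∈ s, (what i * ‖x - A i‖
          + ⟪(what i / ‖A i - xbar‖) • (A i - xbar), d⟫)
        = ∑ i ∈ s, what i * ‖x - A i‖ + ⟪S, d⟫ := by
      rw [Finset.sum_add_distrib, hinnerS]
    rw [hexp] at hsum_s
    have hCS : ⟪S, d⟫ ≤ W * ‖d‖ :=
      le_trans (real_inner_le_norm S d)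
        (mul_le_mul_of_nonneg_right hcond (norm_nonneg d))
    have ht1 : ∑ i ∈ t, what i * ‖xbar - A i‖ = 0 := by
      refine Finset.sum_eq_zero fun i hi => ?_
      rw [hmem_t i hi, sub_self, norm_zero, mul_zero]
    have ht2 : ∑ i ∈ t, what i * ‖x - A i‖ = W * ‖d‖ := by
      rw [hW, Finset.sum_mul]
      refine Finset.sum_congr rfl fun i hi => ?_
      rw [hmem_t i hi, ← hd]
    rw [hsplit (fun i => what i * ‖xbar - A i‖), hsplit (fun i => what i * ‖x - A i‖),
      ht1, ht2]
    linarith
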